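/- arXiv:1911.12873 — 6 statements merged into one kernel-verified Lean document; each statement's English description precedes it below -/
import Mathlib

section
/- Let A be a *-subalgebra of B(H), J an antilinear isometry on H, and ν ∈ B(H) invertible with ν* = ν. Suppose for all a, b ∈ A the commutator [a, J(νbν⁻¹)J⁻¹] = 0. Then for all a, b ∈ A also [a, J(ν⁻¹bν)J⁻¹] = 0. -/
open scoped ComplexConjugate

set_option maxHeartbeats 4000000

/-- For a `*`-subalgebra `A ⊆ B(H)`, an antilinear isometry `J`, and a
self-adjoint invertible `ν ∈ B(H)`, if `[a, J(νbν⁻¹)J⁻¹] = 0` for all `a, b ∈ A`, then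
also `[a, J(ν⁻¹bν)J⁻¹] = 0` for all `a, b ∈ A`. -/
theorem stmt1 {H : Type*} [NormedAddCommGroup H] [InnerProductSpace ℂ H] [CompleteSpace H]
    (A : StarSubalgebra ℂ (H →L[ℂ] H))
    (J Jinv : H → H)
    (hJadd : ∀ x y, J (x + y) = J x + J y)
    (hJconj : ∀ (c : ℂ) (x : H), J (c • x) = (starRingEnd ℂ c) • J x)
    (hJiso : ∀ x, ‖J x‖ = ‖x‖)
    (hJi : ∀ x, J (Jinv x) = x) (hiJ : ∀ x, Jinv (J x) = x)
    (ν νinv : H →L[ℂ] H)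
    (hν : ν.comp νinv = ContinuousLinearMap.id ℂ H)
    (hν' : νinv.comp ν = ContinuousLinearMap.id ℂ H)
    (hsa : IsSelfAdjoint ν)
    (h0 : ∀ a ∈ A, ∀ b ∈ A, ∀ v,
      a (J (ν (b (νinv (Jinv v))))) = J (ν (b (νinv (Jinv (a v)))))) :
    ∀ a ∈ A, ∀ b ∈ A, ∀ v,
      a (J (νinv (b (ν (Jinv v))))) = J (νinv (b (ν (Jinv (a v))))) := by
  -- basic antilinearity facts for J
  have hJsub : ∀ x y, J (x - y) = J x - J y := by
    intro x y
    have : J (x + (-1 : ℂ) • y) = J x + (starRingEnd ℂ (-1 : ℂ)) • J y := by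
      rw [hJadd, hJconj]
    simpa [sub_eq_add_neg] using this
  -- the key antiunitarity property of J
  have key : ∀ u w : H, (inner ℂ (J u) (J w) : ℂ) = inner ℂ w u := by
    intro u w
    have h1 : J u + J w = J (u + w) := (hJadd u w).symm
    have h2 : J u - J w = J (u - w) := (hJsub u w).symm
    have hI : (RCLike.I : ℂ) = Complex.I := rfl
    have h3 : J u - (RCLike.I : ℂ) • J w = J (u + (RCLike.I : ℂ) • w) := by
      rw [hJadd, hJconj]
      simp [hI, Complex.conj_I, sub_eq_add_neg, neg_smul]
    have h4 : J u + (RCLike.I : ℂ) • J w = J (u - (RCLike.I : ℂ) • w) := by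
      rw [hJsub, hJconj]
      simp [hI, Complex.conj_I, sub_eq_add_neg, neg_smul]
    have nI : ∀ z : H, ‖(RCLike.I : ℂ) • z‖ = ‖z‖ := by
      intro z; rw [norm_smul]; simp [hI]
    rw [inner_eq_sum_norm_sq_div_four, inner_eq_sum_norm_sq_div_four,
      h1, h2, h3, h4, hJiso, hJiso, hJiso, hJiso]
    have e1 : ‖u + w‖ = ‖w + u‖ := by rw [add_comm]
    have e2 : ‖u - w‖ = ‖w - u‖ := by rw [← neg_sub, norm_neg]
    have e3 : ‖u + (RCLike.I : ℂ) • w‖ = ‖w - (RCLike.I : ℂ) • u‖ := by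
      rw [← nI (w - (RCLike.I : ℂ) • u)]
      congr 1
      rw [smul_sub, smul_smul]
      simp [hI, Complex.I_mul_I, sub_eq_add_neg, add_comm]
    have e4 : ‖u - (RCLike.I : ℂ) • w‖ = ‖w + (RCLike.I : ℂ) • u‖ := by
      rw [← nI (w + (RCLike.I : ℂ) • u), ← norm_neg (u - (RCLike.I : ℂ) • w)]
      congr 1
      rw [smul_add, smul_smul]
      simp [hI, Complex.I_mul_I, neg_sub, sub_eq_add_neg, add_comm]
    rw [e1, e2, e3, e4]
  -- self-adjointness of ν and νinv
  have hνs : ∀ x y : H, (inner ℂ (ν x) y : ℂ) = inner ℂ x (ν y) := by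
    intro x y
    have := ContinuousLinearMap.adjoint_inner_right ν x y
    rw [← ContinuousLinearMap.star_eq_adjoint, hsa.star_eq] at this
    exact this.symm
  have hνinvs : ∀ x y : H, (inner ℂ (νinv x) y : ℂ) = inner ℂ x (νinv y) := by
    intro x y
    have h1 : (inner ℂ (νinv x) y : ℂ) = inner ℂ (νinv x) (ν (νinv y)) := by
      have : ν (νinv y) = y := congrFun (congrArg (DFunLike.coe) hν) y
      rw [this]
    rw [h1, ← hνs]
    have : νinv (ν (νinv x)) = νinv x := congrFun (congrArg (DFunLike.coe) hν') (νinv x)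
    have h2 : ν (νinv x) = x := congrFun (congrArg (DFunLike.coe) hν) x
    rw [h2]
  intro a ha b hb v
  have ha' : star a ∈ A := star_mem ha
  have hb' : star b ∈ A := star_mem hb
  have hstar : ∀ (c : H →L[ℂ] H) (x y : H), (inner ℂ (c x) y : ℂ) = inner ℂ x (star c y) := by
    intro c x y
    rw [ContinuousLinearMap.star_eq_adjoint, ContinuousLinearMap.adjoint_inner_right]
  -- adjoint relation between T x = J(ν((star b)(νinv(Jinv x)))) and S y = J(νinv(b(ν(Jinv y))))
  have hadj : ∀ x y : H,
      (inner ℂ (J (ν ((star b) (νinv (Jinv x))))) y : ℂ)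
        = inner ℂ x (J (νinv (b (ν (Jinv y))))) := by
    intro x y
    calc (inner ℂ (J (ν ((star b) (νinv (Jinv x))))) y : ℂ)
        = inner ℂ (J (ν ((star b) (νinv (Jinv x))))) (J (Jinv y)) := by rw [hJi]
      _ = inner ℂ (Jinv y) (ν ((star b) (νinv (Jinv x)))) := key _ _
      _ = inner ℂ (ν (Jinv y)) ((star b) (νinv (Jinv x))) := (hνs _ _).symm
      _ = inner ℂ (b (ν (Jinv y))) (νinv (Jinv x)) := by
            rw [hstar b (ν (Jinv y)) (νinv (Jinv x))]
      _ = inner ℂ (νinv (b (ν (Jinv y)))) (Jinv x) := by rw [hνinvs]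
      _ = inner ℂ (J (Jinv x)) (J (νinv (b (ν (Jinv y))))) := (key _ _).symm
      _ = inner ℂ x (J (νinv (b (ν (Jinv y))))) := by rw [hJi]
  have hadj' : ∀ x y : H,
      (inner ℂ (J (νinv (b (ν (Jinv x))))) y : ℂ)
        = inner ℂ x (J (ν ((star b) (νinv (Jinv y))))) := by
    intro x y
    have := hadj y x
    calc (inner ℂ (J (νinv (b (ν (Jinv x))))) y : ℂ)
        = conj (inner ℂ y (J (νinv (b (ν (Jinv x)))))) := (inner_conj_symm _ _).symm
      _ = conj (inner ℂ (J (ν ((star b) (νinv (Jinv y))))) x) := by rw [this]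
      _ = inner ℂ x (J (ν ((star b) (νinv (Jinv y))))) := inner_conj_symm _ _
  apply ext_inner_right ℂ
  intro w
  have hcomm := h0 (star a) ha' (star b) hb'
  have s1 : (inner ℂ (a (J (νinv (b (ν (Jinv v)))))) w : ℂ)
      = inner ℂ (J (νinv (b (ν (Jinv v))))) (star a w) := hstar a _ w
  have s2 : (inner ℂ (J (νinv (b (ν (Jinv v))))) (star a w) : ℂ)
      = inner ℂ v (J (ν ((star b) (νinv (Jinv (star a w)))))) := hadj' v (star a w)
  have s3 : (inner ℂ v (J (ν ((star b) (νinv (Jinv (star a w)))))) : ℂ)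
      = inner ℂ v ((star a) (J (ν ((star b) (νinv (Jinv w)))))) := by rw [hcomm w]
  have s4 : (inner ℂ v ((star a) (J (ν ((star b) (νinv (Jinv w)))))) : ℂ)
      = inner ℂ (a v) (J (ν ((star b) (νinv (Jinv w))))) := (hstar a v _).symm
  have s5 : (inner ℂ (a v) (J (ν ((star b) (νinv (Jinv w)))))  : ℂ)
      = inner ℂ (J (νinv (b (ν (Jinv (a v)))))) w := (hadj' (a v) w).symm
  rw [s1, s2, s3, s4, s5]
end

section
/- Let (A, H, D, J, ν) satisfy the twisted zero- and first-order conditions, the twisted ε′-condition D J ν = ε′ ν J D (ε′ = ±1), and the regularity condition ν J ν = J, with J² = ±1. Define D′_ω = D + ω + ε′·νJ(ω)J⁻¹ν for a one-form ω. Then D′_ω satisfies the twisted ε′-condition: D′_ω J ν = ε′ ν J D′_ω. -/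
/-- Pointwise commutator of two (not necessarily linear) maps on `H`. -/
def fcomm {H : Type*} [AddCommGroup H] (S T : H → H) : H → H :=
  fun v => S (T v) - T (S v)

/-- Conjugation of a map `T` by the antilinear bijection `J` (with inverse `Jinv`):
the map `J T J⁻¹`. -/
def conjJ {H : Type*} (J Jinv : H → H) (T : H → H) : H → H :=
  fun v => J (T (Jinv v))

/-- Under the twisted zero- and first-order conditions, the twisted
`ε′`-condition `D J ν = ε′ ν J D` and the regularity condition `ν J ν = J` (with
`J² = ±1`), the modified fluctuation `D′_ω = D + ω + ε′·νJ(ω)J⁻¹ν` of a one-form `ω`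
again satisfies the twisted `ε′`-condition `D′_ω J ν = ε′ ν J D′_ω`. -/
theorem stmt6 {H : Type*} [NormedAddCommGroup H] [InnerProductSpace ℂ H]
    (A : Subalgebra ℂ (H →L[ℂ] H))
    (J Jinv : H → H)
    (hJadd : ∀ x y, J (x + y) = J x + J y)
    (hJconj : ∀ (c : ℂ) (x : H), J (c • x) = (starRingEnd ℂ c) • J x)
    (hJi : ∀ x, J (Jinv x) = x) (hiJ : ∀ x, Jinv (J x) = x)
    (ε : ℂ) (hε : ε = 1 ∨ ε = -1)
    (hJ2 : ∀ x, J (J x) = ε • x)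
    (ε' : ℂ) (hε' : ε' = 1 ∨ ε' = -1)
    (D : H →L[ℂ] H)
    (ν νinv : H →L[ℂ] H)
    (hν : ν.comp νinv = ContinuousLinearMap.id ℂ H)
    (hν' : νinv.comp ν = ContinuousLinearMap.id ℂ H)
    (hreg : ∀ x, ν (J (ν x)) = J x)
    (heps : ∀ x, D (J (ν x)) = ε' • ν (J (D x)))
    (h0 : ∀ a ∈ A, ∀ b ∈ A, ∀ v,
      a (conjJ J Jinv (⇑ν ∘ ⇑b ∘ ⇑νinv) v) = conjJ J Jinv (⇑ν ∘ ⇑b ∘ ⇑νinv) (a v))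
    (h0' : ∀ a ∈ A, ∀ b ∈ A, ∀ v,
      a (conjJ J Jinv (⇑νinv ∘ ⇑b ∘ ⇑ν) v) = conjJ J Jinv (⇑νinv ∘ ⇑b ∘ ⇑ν) (a v))
    (h1 : ∀ a ∈ A, ∀ b ∈ A, ∀ v,
      fcomm ⇑D ⇑a (conjJ J Jinv (⇑ν ∘ ⇑b ∘ ⇑νinv) v)
        = conjJ J Jinv (⇑νinv ∘ ⇑b ∘ ⇑ν) (fcomm ⇑D ⇑a v))
    (n : ℕ) (c d : Fin n → (H →L[ℂ] H))
    (hc : ∀ i, c i ∈ A) (hd : ∀ i, d i ∈ A)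
    -- `D′_ω = D + ω + ε′·νJωJ⁻¹ν`, with `ω = Σᵢ cᵢ[D, dᵢ]`
    (Dω' : H → H)
    (hDω' : ∀ v, Dω' v
      = D v + (∑ i, c i * (D * d i - d i * D)) v
        + ε' • ν (J ((∑ i, c i * (D * d i - d i * D)) (Jinv (ν v))))) :
    ∀ v, Dω' (J (ν v)) = ε' • ν (J (Dω' v)) := by
  intro v
  set ω : H →L[ℂ] H := ∑ i, c i * (D * d i - d i * D) with hω
  have hε'2 : ε' * ε' = 1 := by rcases hε' with h | h <;> rw [h] <;> ring
  have hε2 : ε * ε = 1 := by rcases hε with h | h <;> rw [h] <;> ring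
  have hε'c : (starRingEnd ℂ) ε' = ε' := by rcases hε' with h | h <;> simp [h]
  have hεc : (starRingEnd ℂ) ε = ε := by rcases hε with h | h <;> simp [h]
  have hJinv : ∀ y, Jinv y = ε • J y := by
    intro y
    have h1 : J (ε • J y) = y := by
      rw [hJconj, hεc, hJ2, smul_smul, hε2, one_smul]
    conv_lhs => rw [← h1]
    rw [hiJ]
  rw [hDω' (J (ν v)), hDω' v]
  rw [hreg v, hiJ, heps v]
  rw [hJadd, hJadd, hJconj, hε'c, map_add, map_add, map_smul]
  rw [hreg (J (ω (Jinv (ν v)))), hJ2, hJinv (ν v), map_smul]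
  simp only [smul_add, smul_smul]
  rw [show ε' * (ε' * (ε * ε)) = 1 from by rw [hε2, mul_one, hε'2], one_smul]
  abel
end

section
/- Let (A, H, D, J) be a real spectral triple satisfying the zero-order condition [a, JbJ⁻¹] = 0 and first-order condition [D,a]·JbJ⁻¹ = JbJ⁻¹·[D,a] for all a, b ∈ A. Let k ∈ A be positive and invertible, set ν = k⁻¹·JkJ⁻¹ and D_k = (JkJ⁻¹)D(JkJ⁻¹). Then the twisted first-order condition holds: [D_k, a]·J(νbν⁻¹)J⁻¹ = J(ν⁻¹bν)J⁻¹·[D_k, a] for all a, b ∈ A, where νbν⁻¹ = k⁻¹bk. -/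
/-- Let `(A, H, D, J)` be a real spectral triple satisfying the zero- and
first-order conditions, `k ∈ A` positive invertible, `ν = k⁻¹·JkJ⁻¹` and
`D_k = (JkJ⁻¹)D(JkJ⁻¹)`. Then the twisted first-order condition
`[D_k, a]·J(k⁻¹bk)J⁻¹ = J(kbk⁻¹)J⁻¹·[D_k, a]` holds for all `a, b ∈ A`
(here `νbν⁻¹ = k⁻¹bk`). -/
theorem stmt8 {H : Type*} [NormedAddCommGroup H] [InnerProductSpace ℂ H] [CompleteSpace H]
    (A : StarSubalgebra ℂ (H →L[ℂ] H))
    (J Jinv : H → H)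
    (hJadd : ∀ x y, J (x + y) = J x + J y)
    (hJconj : ∀ (c : ℂ) (x : H), J (c • x) = (starRingEnd ℂ c) • J x)
    (hJiso : ∀ x, ‖J x‖ = ‖x‖)
    (hJi : ∀ x, J (Jinv x) = x) (hiJ : ∀ x, Jinv (J x) = x)
    (D : H →L[ℂ] H)
    (h0 : ∀ a ∈ A, ∀ b ∈ A, ∀ v,
      a (conjJ J Jinv ⇑b v) = conjJ J Jinv ⇑b (a v))
    (h1 : ∀ a ∈ A, ∀ b ∈ A, ∀ v,
      fcomm ⇑D ⇑a (conjJ J Jinv ⇑b v) = conjJ J Jinv ⇑b (fcomm ⇑D ⇑a v))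
    (k kinv : H →L[ℂ] H) (hkA : k ∈ A)
    (hkpos : k.IsPositive)
    (hk : k.comp kinv = ContinuousLinearMap.id ℂ H)
    (hk' : kinv.comp k = ContinuousLinearMap.id ℂ H) :
    ∀ a ∈ A, ∀ b ∈ A, ∀ v,
      fcomm (conjJ J Jinv ⇑k ∘ ⇑D ∘ conjJ J Jinv ⇑k) ⇑a
          (conjJ J Jinv (⇑kinv ∘ ⇑b ∘ ⇑k) v)
        = conjJ J Jinv (⇑k ∘ ⇑b ∘ ⇑kinv)
            (fcomm (conjJ J Jinv ⇑k ∘ ⇑D ∘ conjJ J Jinv ⇑k) ⇑a v) := by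
  intro a ha b hb v
  have hkk : ∀ y, k (kinv y) = y := fun y => by
    simpa using DFunLike.congr_fun hk y
  have hkk' : ∀ y, kinv (k y) = y := fun y => by
    simpa using DFunLike.congr_fun hk' y
  have hJsub : ∀ x y, J (x - y) = J x - J y := fun x y => by
    have h := hJadd (x - y) y
    rw [sub_add_cancel] at h
    exact eq_sub_of_add_eq h.symm
  have hJisub : ∀ x y, Jinv (x - y) = Jinv x - Jinv y := fun x y => by
    apply Function.LeftInverse.injective hiJ
    rw [hJsub, hJi, hJi, hJi]
  have hcomp3 : ∀ (f g h : H → H) x,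
      conjJ J Jinv (f ∘ g ∘ h) x
        = conjJ J Jinv f (conjJ J Jinv g (conjJ J Jinv h x)) := by
    intro f g h x; simp [conjJ, hiJ, Function.comp]
  have hCkCi : ∀ x, conjJ J Jinv ⇑k (conjJ J Jinv ⇑kinv x) = x := fun x => by
    simp [conjJ, hiJ, hkk, hJi]
  have hCiCk : ∀ x, conjJ J Jinv ⇑kinv (conjJ J Jinv ⇑k x) = x := fun x => by
    simp [conjJ, hiJ, hkk', hJi]
  have h0k : ∀ x, a (conjJ J Jinv ⇑k x) = conjJ J Jinv ⇑k (a x) := h0 a ha k hkA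
  have h1b : ∀ x, fcomm ⇑D ⇑a (conjJ J Jinv ⇑b x)
      = conjJ J Jinv ⇑b (fcomm ⇑D ⇑a x) := h1 a ha b hb
  have hDk : ∀ x, fcomm (conjJ J Jinv ⇑k ∘ ⇑D ∘ conjJ J Jinv ⇑k) ⇑a x
      = conjJ J Jinv ⇑k (fcomm ⇑D ⇑a (conjJ J Jinv ⇑k x)) := fun x => by
    simp only [fcomm, Function.comp]
    rw [← h0k, h0k (D (conjJ J Jinv ⇑k x))]
    simp [conjJ, hJisub, map_sub, hJsub]
  rw [hcomp3, hcomp3, hDk, hDk, hCkCi, h1b, hCiCk]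
end

section
/- Let (A, H, D, J) satisfy the ε′-condition DJ = ε′JD and the first-order condition, let k ∈ A be positive invertible with JkJ⁻¹ commuting with all of A, and D_k = (JkJ⁻¹)D(JkJ⁻¹), ν = k⁻¹JkJ⁻¹. If additionally [D, k] commutes suitably so that D_k J ν can be simplified (specifically kDk J = ε′ k J D k J⁻¹·J after applying DJ = ε′JD), then the twisted ε′-condition holds: D_k J ν = ε′ ν J D_k. -/
/-- Let `(A, H, D, J)` satisfy the `ε′`-condition `DJ = ε′JD` and the
first-order condition, `k ∈ A` positive invertible with `JkJ⁻¹` commuting with all of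
`A`, `D_k = (JkJ⁻¹)D(JkJ⁻¹)` and `ν = k⁻¹JkJ⁻¹`. Then the twisted `ε′`-condition holds:
`D_k J ν = ε′ ν J D_k`. -/
theorem stmt10 {H : Type*} [NormedAddCommGroup H] [InnerProductSpace ℂ H] [CompleteSpace H]
    (A : StarSubalgebra ℂ (H →L[ℂ] H))
    (J Jinv : H → H)
    (hJadd : ∀ x y, J (x + y) = J x + J y)
    (hJconj : ∀ (c : ℂ) (x : H), J (c • x) = (starRingEnd ℂ c) • J x)
    (hJi : ∀ x, J (Jinv x) = x) (hiJ : ∀ x, Jinv (J x) = x)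
    (ε : ℂ) (hε : ε = 1 ∨ ε = -1)
    (hJ2 : ∀ x, J (J x) = ε • x)
    (ε' : ℂ) (hε' : ε' = 1 ∨ ε' = -1)
    (D : H →L[ℂ] H)
    -- the `ε′`-condition `D J = ε′ J D`
    (heps : ∀ v, D (J v) = ε' • J (D v))
    -- the first-order condition
    (h1 : ∀ a ∈ A, ∀ b ∈ A, ∀ v,
      fcomm ⇑D ⇑a (conjJ J Jinv ⇑b v) = conjJ J Jinv ⇑b (fcomm ⇑D ⇑a v))
    (k kinv : H →L[ℂ] H) (hkA : k ∈ A)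
    (hkpos : k.IsPositive)
    (hk : k.comp kinv = ContinuousLinearMap.id ℂ H)
    (hk' : kinv.comp k = ContinuousLinearMap.id ℂ H)
    -- `JkJ⁻¹` commutes with all of `A`
    (hcomm : ∀ a ∈ A, ∀ v, a (J (k (Jinv v))) = J (k (Jinv (a v)))) :
    -- `D_k J ν = ε′ ν J D_k` for `D_k = (JkJ⁻¹)D(JkJ⁻¹)` and `ν = k⁻¹JkJ⁻¹`
    ∀ v,
      (conjJ J Jinv ⇑k ∘ ⇑D ∘ conjJ J Jinv ⇑k) (J (kinv (J (k (Jinv v)))))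
        = ε' • kinv (J (k (Jinv (J ((conjJ J Jinv ⇑k ∘ ⇑D ∘ conjJ J Jinv ⇑k) v))))) := by
  -- auxiliary facts
  have hkkinv : ∀ x, k (kinv x) = x := fun x => by
    simpa using DFunLike.congr_fun hk x
  have hkinvk : ∀ x, kinv (k x) = x := fun x => by
    simpa using DFunLike.congr_fun hk' x
  have hεc : starRingEnd ℂ ε = ε := by rcases hε with h | h <;> simp [h]
  have hε'c : starRingEnd ℂ ε' = ε' := by rcases hε' with h | h <;> simp [h]
  have hε2 : ε * ε = 1 := by rcases hε with h | h <;> norm_num [h]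
  have hε'2 : ε' * ε' = 1 := by rcases hε' with h | h <;> norm_num [h]
  have hJinvc : ∀ (c : ℂ) (x : H), Jinv (c • x) = (starRingEnd ℂ c) • Jinv x := by
    intro c x
    have h : J ((starRingEnd ℂ c) • Jinv x) = c • x := by
      rw [hJconj, hJi]; simp
    rw [← h, hiJ]
  have hJinv_eq : ∀ x, Jinv x = ε • J x := by
    intro x
    have h1 := hiJ (J x)
    rw [hJ2, hJinvc, hεc] at h1
    calc Jinv x = (ε * ε) • Jinv x := by rw [hε2, one_smul]
      _ = ε • (ε • Jinv x) := by rw [smul_smul]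
      _ = ε • J x := by rw [h1]
  intro v
  simp only [Function.comp_apply, conjJ, hiJ, hkkinv]
  rw [hcomm k hkA]
  simp only [hJ2, map_smul, hkinvk, heps, map_smul, hJinvc, hεc, hε'c, hJconj, hJinv_eq,
    smul_smul]
  rw [show ε * ε = 1 from hε2]
  ring_nf
  congr 1
  rcases hε with rfl | rfl <;> rcases hε' with rfl | rfl <;> norm_num
end

section
/- (Tensor product, first-order part) With notation as above, suppose additionally D′ is an operator on H′ satisfying [D′,a′]·J′(ν′b′ν′⁻¹)J′⁻¹ = J′(ν′⁻¹b′ν′)J′⁻¹·[D′,a′] for all a′,b′ ∈ A′. Then D = D′⊗1 satisfies the twisted first-order condition on H′⊗H″ with twist ν = ν′⊗1 and real structure J = J′⊗J″: [D, a′⊗a″]·J(ν(b′⊗b″)ν⁻¹)J⁻¹ = J(ν⁻¹(b′⊗b″)ν)J⁻¹·[D, a′⊗a″]. -/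
open scoped TensorProduct

/-- The operator `f ⊗ g` on the (algebraic) tensor product `H' ⊗ H''`. -/
noncomputable def opTensor {H' H'' : Type*}
    [NormedAddCommGroup H'] [InnerProductSpace ℂ H']
    [NormedAddCommGroup H''] [InnerProductSpace ℂ H'']
    (f : H' →L[ℂ] H') (g : H'' →L[ℂ] H'') : H' ⊗[ℂ] H'' →ₗ[ℂ] H' ⊗[ℂ] H'' :=
  TensorProduct.map f.toLinearMap g.toLinearMap

/-- tensor product, first-order part: If `D′` satisfies the twisted
first-order condition on `H′` with twist `ν′` and real structure `J′`, and the
zero-order conditions of the previous statement hold, then `D = D′⊗1` satisfies the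
twisted first-order condition on `H′⊗H″` with twist `ν = ν′⊗1` and `J = J′⊗J″`. -/
theorem stmt12 {H' H'' : Type*}
    [NormedAddCommGroup H'] [InnerProductSpace ℂ H'] [CompleteSpace H']
    [NormedAddCommGroup H''] [InnerProductSpace ℂ H''] [CompleteSpace H'']
    (A' : StarSubalgebra ℂ (H' →L[ℂ] H')) (A'' : StarSubalgebra ℂ (H'' →L[ℂ] H''))
    (J' J'inv : H' → H')
    (hJ'add : ∀ x y, J' (x + y) = J' x + J' y)
    (hJ'conj : ∀ (c : ℂ) (x : H'), J' (c • x) = (starRingEnd ℂ c) • J' x)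
    (hJ'1 : ∀ x, J' (J'inv x) = x) (hJ'2 : ∀ x, J'inv (J' x) = x)
    (J'' J''inv : H'' → H'')
    (hJ''add : ∀ x y, J'' (x + y) = J'' x + J'' y)
    (hJ''conj : ∀ (c : ℂ) (x : H''), J'' (c • x) = (starRingEnd ℂ c) • J'' x)
    (hJ''1 : ∀ x, J'' (J''inv x) = x) (hJ''2 : ∀ x, J''inv (J'' x) = x)
    (ν' ν'inv : H' →L[ℂ] H')
    (hν' : ν'.comp ν'inv = ContinuousLinearMap.id ℂ H')
    (hν'2 : ν'inv.comp ν' = ContinuousLinearMap.id ℂ H')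
    -- twisted zero-order condition on the first factor
    (h0' : ∀ a' ∈ A', ∀ b' ∈ A', ∀ x,
      a' (J' (ν' (b' (ν'inv (J'inv x))))) = J' (ν' (b' (ν'inv (J'inv (a' x))))))
    -- zero-order condition on the second factor
    (h0'' : ∀ a'' ∈ A'', ∀ b'' ∈ A'', ∀ y,
      a'' (J'' (b'' (J''inv y))) = J'' (b'' (J''inv (a'' y))))
    -- twisted first-order condition for `D′` on the first factor
    (D' : H' →L[ℂ] H')
    (h1' : ∀ a' ∈ A', ∀ b' ∈ A', ∀ x,
      (D' (a' (J' (ν' (b' (ν'inv (J'inv x)))))) - a' (D' (J' (ν' (b' (ν'inv (J'inv x)))))))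
        = J' (ν'inv (b' (ν' (J'inv (D' (a' x) - a' (D' x)))))))
    -- `J = J′⊗J″` and its inverse `J⁻¹ = J′⁻¹⊗J″⁻¹`
    (J Jinv : H' ⊗[ℂ] H'' → H' ⊗[ℂ] H'')
    (hJadd : ∀ u v, J (u + v) = J u + J v)
    (hJinvadd : ∀ u v, Jinv (u + v) = Jinv u + Jinv v)
    (hJ : ∀ (x : H') (y : H''), J (x ⊗ₜ[ℂ] y) = J' x ⊗ₜ[ℂ] J'' y)
    (hJinv : ∀ (x : H') (y : H''), Jinv (x ⊗ₜ[ℂ] y) = J'inv x ⊗ₜ[ℂ] J''inv y) :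
    ∀ a' ∈ A', ∀ a'' ∈ A'', ∀ b' ∈ A', ∀ b'' ∈ A'', ∀ v,
      (opTensor D' 1 ∘ₗ opTensor a' a'' - opTensor a' a'' ∘ₗ opTensor D' 1)
          (J (opTensor ν' 1 (opTensor b' b'' (opTensor ν'inv 1 (Jinv v)))))
        = J (opTensor ν'inv 1 (opTensor b' b'' (opTensor ν' 1 (Jinv
            ((opTensor D' 1 ∘ₗ opTensor a' a'' - opTensor a' a'' ∘ₗ opTensor D' 1) v))))) := by
  intro a' ha' a'' ha'' b' hb' b'' hb'' v
  have hJ0 : J 0 = 0 := by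
    have h := hJadd 0 0
    rw [add_zero] at h
    exact left_eq_add.mp h
  have hJinv0 : Jinv 0 = 0 := by
    have h := hJinvadd 0 0
    rw [add_zero] at h
    exact left_eq_add.mp h
  induction v using TensorProduct.induction_on with
  | zero => simp [hJinv0, hJ0]
  | tmul x y =>
      simp only [opTensor, LinearMap.sub_apply, LinearMap.comp_apply,
        TensorProduct.map_tmul, ContinuousLinearMap.coe_coe,
        ContinuousLinearMap.one_apply, hJ, hJinv, ← TensorProduct.sub_tmul]
      rw [h1' a' ha' b' hb' x, h0'' a'' ha'' b'' hb'' y]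
  | add u w hu hw =>
      simp only [LinearMap.sub_apply, LinearMap.comp_apply, map_add, hJadd,
        hJinvadd, add_sub_add_comm] at hu hw ⊢
      rw [hu, hw]
end

section
/- (Tensor product, graded part) Let γ′ be a self-adjoint unitary on H′ with γ′a′ = a′γ′ for all a′ ∈ A′, γ′D′ = −D′γ′, and γ′J′ = J′γ′. Suppose D″ on H″ satisfies the twisted first-order condition with twist ν″ and real structure J″, and [a′, J′b′J′⁻¹] = 0 on H′. Then D = γ′⊗D″ satisfies the twisted first-order condition on H′⊗H″ with twist 1⊗ν″ and J = J′⊗J″: [γ′⊗D″, a′⊗a″]·J((1⊗ν″)(b′⊗b″)(1⊗ν″)⁻¹)J⁻¹ = J((1⊗ν″)⁻¹(b′⊗b″)(1⊗ν″))J⁻¹·[γ′⊗D″, a′⊗a″]. -/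
open scoped TensorProduct

/-- tensor product, graded part: If `γ′` is a self-adjoint unitary
grading on `H′` commuting with `A′`, anticommuting with `D′` and commuting with `J′`,
`D″` satisfies the twisted first-order condition on `H″` with twist `ν″` and real
structure `J″`, and `[a′, J′b′J′⁻¹] = 0` on `H′`, then `D = γ′⊗D″` satisfies the twisted
first-order condition on `H′⊗H″` with twist `1⊗ν″` and `J = J′⊗J″`. -/
theorem stmt13 {H' H'' : Type*}
    [NormedAddCommGroup H'] [InnerProductSpace ℂ H'] [CompleteSpace H']
    [NormedAddCommGroup H''] [InnerProductSpace ℂ H''] [CompleteSpace H'']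
    (A' : StarSubalgebra ℂ (H' →L[ℂ] H')) (A'' : StarSubalgebra ℂ (H'' →L[ℂ] H''))
    (J' J'inv : H' → H')
    (hJ'add : ∀ x y, J' (x + y) = J' x + J' y)
    (hJ'conj : ∀ (c : ℂ) (x : H'), J' (c • x) = (starRingEnd ℂ c) • J' x)
    (hJ'1 : ∀ x, J' (J'inv x) = x) (hJ'2 : ∀ x, J'inv (J' x) = x)
    (J'' J''inv : H'' → H'')
    (hJ''add : ∀ x y, J'' (x + y) = J'' x + J'' y)
    (hJ''conj : ∀ (c : ℂ) (x : H''), J'' (c • x) = (starRingEnd ℂ c) • J'' x)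
    (hJ''1 : ∀ x, J'' (J''inv x) = x) (hJ''2 : ∀ x, J''inv (J'' x) = x)
    -- the grading `γ′`: a self-adjoint unitary commuting with `A′` and `J′`,
    -- anticommuting with `D′`
    (γ' D' : H' →L[ℂ] H')
    (hγsa : IsSelfAdjoint γ')
    (hγ2 : γ'.comp γ' = ContinuousLinearMap.id ℂ H')
    (hγA : ∀ a' ∈ A', γ'.comp a' = a'.comp γ')
    (hγD : γ'.comp D' = -(D'.comp γ'))
    (hγJ : ∀ x, γ' (J' x) = J' (γ' x))
    -- zero-order condition on the first factor
    (h0' : ∀ a' ∈ A', ∀ b' ∈ A', ∀ x,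
      a' (J' (b' (J'inv x))) = J' (b' (J'inv (a' x))))
    -- twisted first-order condition for `D″` with twist `ν″` on the second factor
    (D'' ν'' ν''inv : H'' →L[ℂ] H'')
    (hν'' : ν''.comp ν''inv = ContinuousLinearMap.id ℂ H'')
    (hν''2 : ν''inv.comp ν'' = ContinuousLinearMap.id ℂ H'')
    (h1'' : ∀ a'' ∈ A'', ∀ b'' ∈ A'', ∀ y,
      (D'' (a'' (J'' (ν'' (b'' (ν''inv (J''inv y))))))
          - a'' (D'' (J'' (ν'' (b'' (ν''inv (J''inv y)))))))
        = J'' (ν''inv (b'' (ν'' (J''inv (D'' (a'' y) - a'' (D'' y)))))))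
    -- `J = J′⊗J″` and its inverse `J⁻¹ = J′⁻¹⊗J″⁻¹`
    (J Jinv : H' ⊗[ℂ] H'' → H' ⊗[ℂ] H'')
    (hJadd : ∀ u v, J (u + v) = J u + J v)
    (hJinvadd : ∀ u v, Jinv (u + v) = Jinv u + Jinv v)
    (hJ : ∀ (x : H') (y : H''), J (x ⊗ₜ[ℂ] y) = J' x ⊗ₜ[ℂ] J'' y)
    (hJinv : ∀ (x : H') (y : H''), Jinv (x ⊗ₜ[ℂ] y) = J'inv x ⊗ₜ[ℂ] J''inv y) :
    ∀ a' ∈ A', ∀ a'' ∈ A'', ∀ b' ∈ A', ∀ b'' ∈ A'', ∀ v,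
      (opTensor γ' D'' ∘ₗ opTensor a' a'' - opTensor a' a'' ∘ₗ opTensor γ' D'')
          (J (opTensor 1 ν'' (opTensor b' b'' (opTensor 1 ν''inv (Jinv v)))))
        = J (opTensor 1 ν''inv (opTensor b' b'' (opTensor 1 ν'' (Jinv
            ((opTensor γ' D'' ∘ₗ opTensor a' a'' - opTensor a' a'' ∘ₗ opTensor γ' D'') v))))) := by
  intro a' ha' a'' ha'' b' hb' b'' hb'' v
  have hγa : ∀ z, γ' (a' z) = a' (γ' z) := fun z => by
    have := ContinuousLinearMap.ext_iff.mp (hγA a' ha') z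
    simpa using this
  have hγb : ∀ z, γ' (b' z) = b' (γ' z) := fun z => by
    have := ContinuousLinearMap.ext_iff.mp (hγA b' hb') z
    simpa using this
  have hγJinv : ∀ w, γ' (J'inv w) = J'inv (γ' w) := fun w => by
    conv_rhs => rw [← hJ'1 w]
    rw [hγJ, hJ'2]
  have hJinv0 : Jinv 0 = 0 := by
    have := hJinvadd 0 0; simp only [add_zero] at this
    exact add_eq_left.mp this.symm
  have hJ0 : J 0 = 0 := by
    have := hJadd 0 0; simp only [add_zero] at this
    exact add_eq_left.mp this.symm
  induction v using TensorProduct.induction_on with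
  | zero => simp [hJinv0, hJ0]
  | add u w hu hw =>
      simp only [map_add, hJinvadd, hJadd, hu, hw]
  | tmul x y =>
      simp only [opTensor, LinearMap.sub_apply, LinearMap.comp_apply,
        TensorProduct.map_tmul, ContinuousLinearMap.coe_coe,
        ContinuousLinearMap.one_apply, hJ, hJinv]
      rw [hγa (J' (b' (J'inv x))), ← TensorProduct.tmul_sub,
        h1'' a'' ha'' b'' hb'' y, hγJ, hγb, hγJinv, h0' a' ha' b' hb' (γ' x),
        hγa x, ← TensorProduct.tmul_sub]
      simp only [opTensor, TensorProduct.map_tmul, ContinuousLinearMap.coe_coe,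
        ContinuousLinearMap.one_apply, hJinv, hJ]
end
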